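/- If G is a finitely generated left-orderable group with positive cone P, then the group H(G,P) = B_f ⋊ G is finitely generated; in fact, it is generated by {((0_A, b_{id}), id_G)} ∪ {((0_A, 0_B), e_i)}ᵢ for any finite generating set {e_i} of G. -/

import Mathlib

/-- Underlying set of `H(G,P) = B_f ⋊ G`, where `B_f` has underlying set `A × B` with
`A = {x // 1 < x} →₀ ℤ` (free abelian group on the positive cone `P = {x | 1 < x}`) and
`B = G →₀ ℤ` (free abelian group on `G`). -/
abbrev HCar (G : Type*) [Group G] [LinearOrder G] : Type _ :=
  (({x : G // 1 < x} →₀ ℤ) × (G →₀ ℤ)) × G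

/-- Multiplication of `H(G,P) = B_f ⋊ G`, built from the 2-cocycle `f` on `B` and the
shift action `g · Σ tⱼ b_{gⱼ} = Σ tⱼ b_{g gⱼ}` of `G` on `B_f`. -/
noncomputable def hmul {G : Type*} [Group G] [LinearOrder G]
    (f : (G →₀ ℤ) → (G →₀ ℤ) → ({x : G // 1 < x} →₀ ℤ)) (x y : HCar G) : HCar G :=
  ((x.1.1 + y.1.1 + f x.1.2 (Finsupp.mapDomain (fun z => x.2 * z) y.1.2),
    x.1.2 + Finsupp.mapDomain (fun z => x.2 * z) y.1.2), x.2 * y.2)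

/-- If `G` is a finitely generated left-orderable group (generated by the
finite set `E`, and carrying a left-invariant linear order with positive cone
`{x | 1 < x}`), then `H(G,P) = B_f ⋊ G` is finitely generated: it is generated by
`{((0, b_1), 1)} ∪ {((0, 0), e) : e ∈ E}`.  (Generation is expressed by: every subset
`S` containing these elements and closed under the multiplication `hmul f` and the
inversion `ι` of `H(G,P)` is all of `H(G,P)`.) -/
theorem stmt19 (G : Type*) [Group G] [LinearOrder G]
    (hleft : ∀ a b c : G, a < b → c * a < c * b)
    (f : (G →₀ ℤ) → (G →₀ ℤ) → ({x : G // 1 < x} →₀ ℤ))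
    (hbilin1 : ∀ b b' c : G →₀ ℤ, f (b + b') c = f b c + f b' c)
    (hbilin2 : ∀ b c c' : G →₀ ℤ, f b (c + c') = f b c + f b c')
    (hsingle : ∀ g h : G, f (Finsupp.single g 1) (Finsupp.single h 1) =
      if hlt : g < h then
        Finsupp.single (⟨g⁻¹ * h, by simpa using hleft g h g⁻¹ hlt⟩ : {x : G // 1 < x}) 1
      else 0)
    (E : Finset G) (hE : Subgroup.closure (E : Set G) = ⊤)
    (ι : HCar G → HCar G)
    (hι : ∀ x : HCar G, hmul f x (ι x) = ((0, 0), 1) ∧ hmul f (ι x) x = ((0, 0), 1)) :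
    ∀ S : Set (HCar G),
      (((0 : {x : G // 1 < x} →₀ ℤ), Finsupp.single (1 : G) (1 : ℤ)), (1 : G)) ∈ S →
      (∀ e ∈ E, (((0 : {x : G // 1 < x} →₀ ℤ), (0 : G →₀ ℤ)), e) ∈ S) →
      (∀ x ∈ S, ∀ y ∈ S, hmul f x y ∈ S) →
      (∀ x ∈ S, ι x ∈ S) →
      ∀ x : HCar G, x ∈ S := by
  intro S hb1 hEgen hmulS hiS
  -- basic consequences of bilinearity
  have f0l : ∀ c, f 0 c = 0 := by
    intro c
    have h := hbilin1 0 0 c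
    rw [add_zero] at h
    exact right_eq_add.mp h
  have f0r : ∀ b, f b 0 = 0 := by
    intro b
    have h := hbilin2 b 0 0
    rw [add_zero] at h
    exact right_eq_add.mp h
  have fnegr : ∀ b c, f b (-c) = -f b c := by
    intro b c
    have h := hbilin2 b c (-c)
    rw [add_neg_cancel, f0r] at h
    exact (neg_eq_of_add_eq_zero_right h.symm).symm
  have map1 : ∀ c : G →₀ ℤ, Finsupp.mapDomain (fun z => (1 : G) * z) c = c := by
    intro c
    simp only [one_mul]
    exact Finsupp.mapDomain_id
  have mapid : ∀ c : G →₀ ℤ, Finsupp.mapDomain (fun z : G => z) c = c :=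
    fun c => Finsupp.mapDomain_id
  -- evaluation of hmul
  have hmul_eq : ∀ (a a' c : {x : G // 1 < x} →₀ ℤ) (b b' d : G →₀ ℤ) (g g' k : G),
      a + a' + f b (Finsupp.mapDomain (fun z => g * z) b') = c →
      b + Finsupp.mapDomain (fun z => g * z) b' = d →
      g * g' = k →
      hmul f ((a, b), g) ((a', b'), g') = ((c, d), k) := by
    intro a a' c b b' d g g' k h1 h2 h3
    subst h1; subst h2; subst h3; rfl
  -- closed form for the inverse
  have iota : ∀ (a : {x : G // 1 < x} →₀ ℤ) (b : G →₀ ℤ) (g : G),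
      ι ((a, b), g) = ((-a + f b b, Finsupp.mapDomain (fun z => g⁻¹ * z) (-b)), g⁻¹) := by
    intro a b g
    obtain ⟨h1, -⟩ := hι ((a, b), g)
    set y := ι ((a, b), g) with hy
    have h2 : g * y.2 = 1 := congrArg Prod.snd h1
    have h3 : b + Finsupp.mapDomain (fun z => g * z) y.1.2 = 0 :=
      congrArg (fun t : HCar G => t.1.2) h1
    have h4 : a + y.1.1 + f b (Finsupp.mapDomain (fun z => g * z) y.1.2) = 0 :=
      congrArg (fun t : HCar G => t.1.1) h1
    have hy2 : y.2 = g⁻¹ := by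
      have := congrArg (fun t => g⁻¹ * t) h2
      simpa [← mul_assoc] using this
    have hmap : Finsupp.mapDomain (fun z => g * z) y.1.2 = -b :=
      eq_neg_of_add_eq_zero_right h3
    have hy12 : y.1.2 = Finsupp.mapDomain (fun z => g⁻¹ * z) (-b) := by
      have hcmp := congrArg (Finsupp.mapDomain (fun z => g⁻¹ * z)) hmap
      have e : ((fun z => g⁻¹ * z) ∘ fun z => g * z) = (id : G → G) := by
        funext z; simp
      rwa [← Finsupp.mapDomain_comp, e, Finsupp.mapDomain_id] at hcmp
    have hy11 : y.1.1 = -a + f b b := by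
      rw [hmap, fnegr] at h4
      rw [add_assoc] at h4
      have h5 := eq_neg_of_add_eq_zero_right h4
      calc y.1.1 = y.1.1 + -f b b + f b b := by abel
        _ = -a + f b b := by rw [h5]
    exact Prod.ext (Prod.ext hy11 hy12) hy2
  -- identity element is in S
  have hone : (((0 : {x : G // 1 < x} →₀ ℤ), (0 : G →₀ ℤ)), (1 : G)) ∈ S := by
    have h := hmulS _ hb1 _ (hiS _ hb1)
    rwa [(hι _).1] at h
  -- all ((0,0),g) are in S
  have hT : ∀ g : G, (((0 : {x : G // 1 < x} →₀ ℤ), (0 : G →₀ ℤ)), g) ∈ S := by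
    let T : Subgroup G :=
      { carrier := {g : G | (((0 : {x : G // 1 < x} →₀ ℤ), (0 : G →₀ ℤ)), g) ∈ S}
        one_mem' := hone
        mul_mem' := by
          intro x y hx hy
          have h := hmulS _ hx _ hy
          rwa [hmul_eq 0 0 0 0 0 0 x y (x * y) (by simp [f0l]) (by simp) rfl] at h
        inv_mem' := by
          intro x hx
          have h := hiS _ hx
          rw [iota] at h
          simpa [f0l] using h }
    have hle : Subgroup.closure (E : Set G) ≤ T :=
      (Subgroup.closure_le T).mpr fun e he => hEgen e he
    intro g
    exact hle (by rw [hE]; exact Subgroup.mem_top g)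
  -- all ((0, b_g), 1) are in S
  have hbg : ∀ g : G, (((0 : {x : G // 1 < x} →₀ ℤ), Finsupp.single g (1 : ℤ)), (1 : G)) ∈ S := by
    intro g
    have h1 : (((0 : {x : G // 1 < x} →₀ ℤ), Finsupp.single g (1 : ℤ)), g) ∈ S := by
      have h := hmulS _ (hT g) _ hb1
      rwa [hmul_eq 0 0 0 0 (Finsupp.single (1 : G) 1) (Finsupp.single g 1) g 1 g
        (by simp [f0l]) (by simp [Finsupp.mapDomain_single]) (mul_one g)] at h
    have h2 := hmulS _ h1 _ (hT g⁻¹)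
    rwa [hmul_eq 0 0 0 (Finsupp.single g 1) 0 (Finsupp.single g 1) g g⁻¹ 1
      (by simp [f0r]) (by simp) (by simp)] at h2
  -- all ((a_p, 0), 1) are in S
  have hsingA : ∀ p : {x : G // 1 < x},
      ((Finsupp.single p (1 : ℤ), (0 : G →₀ ℤ)), (1 : G)) ∈ S := by
    rintro ⟨g, hg⟩
    have hng : ¬ g < 1 := asymm hg
    set s1 : G →₀ ℤ := Finsupp.single (1 : G) 1 with hs1
    set sg : G →₀ ℤ := Finsupp.single g 1 with hsg
    set sA : {x : G // 1 < x} →₀ ℤ := Finsupp.single ⟨g, hg⟩ 1 with hsA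
    have fs11 : f s1 s1 = 0 := by simp [hs1, hsingle]
    have fsgg : f sg sg = 0 := by simp [hsg, hsingle]
    have fs1g : f s1 sg = sA := by simp [hs1, hsg, hsA, hsingle, hg]
    have fsg1 : f sg s1 = 0 := by simp [hs1, hsg, hsingle, hng]
    have hxy : ((sA, s1 + sg), (1 : G)) ∈ S := by
      have h := hmulS _ hb1 _ (hbg g)
      rwa [hmul_eq 0 0 sA s1 sg (s1 + sg) 1 1 1
        (by rw [map1, fs1g]; simp) (by rw [map1]) (one_mul 1)] at h
    have hinv1 : (((0 : {x : G // 1 < x} →₀ ℤ), -s1), (1 : G)) ∈ S := by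
      have h := hiS _ hb1
      rw [iota] at h
      simpa [fs11, mapid] using h
    have hz1 : ((sA, sg), (1 : G)) ∈ S := by
      have h := hmulS _ hxy _ hinv1
      rwa [hmul_eq sA 0 sA (s1 + sg) (-s1) sg 1 1 1
        (by rw [map1, hbilin1, fnegr, fnegr, fs11, fsg1]; simp)
        (by rw [map1]; abel) (one_mul 1)] at h
    have hinvg : (((0 : {x : G // 1 < x} →₀ ℤ), -sg), (1 : G)) ∈ S := by
      have h := hiS _ (hbg g)
      rw [iota] at h
      simpa [← hsg, fsgg, mapid] using h
    have h := hmulS _ hz1 _ hinvg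
    rwa [hmul_eq sA 0 sA sg (-sg) 0 1 1 1
      (by rw [map1, fnegr, fsgg]; simp) (by rw [map1]; abel) (one_mul 1)] at h
  -- all ((a, 0), 1) are in S
  have hA : ∀ a : {x : G // 1 < x} →₀ ℤ, ((a, (0 : G →₀ ℤ)), (1 : G)) ∈ S := by
    let V : AddSubgroup ({x : G // 1 < x} →₀ ℤ) :=
      { carrier := {a | ((a, (0 : G →₀ ℤ)), (1 : G)) ∈ S}
        zero_mem' := hone
        add_mem' := by
          intro a a' ha ha'
          have h := hmulS _ ha _ ha'
          rwa [hmul_eq a a' (a + a') 0 0 0 1 1 1 (by simp [f0l]) (by simp) (one_mul 1)] at h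
        neg_mem' := by
          intro a ha
          have h := hiS _ ha
          rw [iota] at h
          simpa [f0l] using h }
    intro a
    have hVall : a ∈ V := by
      induction a using Finsupp.induction with
      | zero => exact V.zero_mem
      | single_add p n r hp hn ih =>
        have hs : Finsupp.single p n ∈ V := by
          have e : Finsupp.single p n = n • Finsupp.single p (1 : ℤ) := by
            rw [Finsupp.smul_single, smul_eq_mul, mul_one]
          rw [e]
          exact AddSubgroup.zsmul_mem V (hsingA p) n
        exact V.add_mem hs ih
    exact hVall
  -- for every b there is an a with ((a, b), 1) in S
  have hW : ∀ b : G →₀ ℤ, ∃ a : {x : G // 1 < x} →₀ ℤ, ((a, b), (1 : G)) ∈ S := by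
    let W : AddSubgroup (G →₀ ℤ) :=
      { carrier := {b | ∃ a : {x : G // 1 < x} →₀ ℤ, ((a, b), (1 : G)) ∈ S}
        zero_mem' := ⟨0, hone⟩
        add_mem' := by
          rintro b b' ⟨a, ha⟩ ⟨a', ha'⟩
          refine ⟨a + a' + f b b', ?_⟩
          have h := hmulS _ ha _ ha'
          rwa [hmul_eq a a' (a + a' + f b b') b b' (b + b') 1 1 1
            (by rw [map1]) (by rw [map1]) (one_mul 1)] at h
        neg_mem' := by
          rintro b ⟨a, ha⟩
          refine ⟨-a + f b b, ?_⟩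
          have h := hiS _ ha
          rw [iota] at h
          simpa [mapid] using h }
    intro b
    have hWall : b ∈ W := by
      induction b using Finsupp.induction with
      | zero => exact W.zero_mem
      | single_add p n r hp hn ih =>
        have hs : Finsupp.single p n ∈ W := by
          have e : Finsupp.single p n = n • Finsupp.single p (1 : ℤ) := by
            rw [Finsupp.smul_single, smul_eq_mul, mul_one]
          rw [e]
          exact AddSubgroup.zsmul_mem W ⟨0, hbg p⟩ n
        exact W.add_mem hs ih
    exact hWall
  -- conclude
  rintro ⟨⟨a, b⟩, g⟩
  obtain ⟨a0, h0⟩ := hW b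
  have h1 : ((a, b), (1 : G)) ∈ S := by
    have h := hmulS _ (hA (a - a0)) _ h0
    rwa [hmul_eq (a - a0) a0 a 0 b b 1 1 1 (by rw [map1, f0l]; simp) (by rw [map1]; simp)
      (one_mul 1)] at h
  have h2 := hmulS _ h1 _ (hT g)
  rwa [hmul_eq a 0 a b 0 b 1 g g (by simp [f0r]) (by simp) (one_mul g)] at h2
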